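/- Refined Pinsker's inequality for Bernoulli distributions (Ordentlich–Weinberger): for all p ∈ [0,1] and all q ∈ (0,1), kl(p,q) ≥ φ(q)·(p − q)², where φ(q) = log((1−q)/q)/(1 − 2q) for q ≠ 1/2 and φ(1/2) = 2. Moreover, φ(q)·(p−q)² is the optimal such quadratic lower bound: for each q ∈ (0,1), the infimum over p ∈ [0,1], p ≠ q, of kl(p,q)/(p−q)² equals φ(q) and is attained at p = 1 − q. -/

import Mathlib

open scoped ENNReal Classical

/-- The Kullback-Leibler divergence between Bernoulli distributions of
parameters `p` and `q`, as a real number (recall `Real.log 0 = 0` in Mathlib,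
which realizes the conventions `0·log 0 = 0` and `0·log(0/0) = 0`). -/
noncomputable def klBin (p q : ℝ) : ℝ :=
  p * Real.log (p / q) + (1 - p) * Real.log ((1 - p) / (1 - q))

/-- The optimal factor in the refined Pinsker inequality of
Ordentlich and Weinberger: `φ(q) = log((1−q)/q)/(1−2q)`, extended by
continuity as `φ(1/2) = 2`. -/
noncomputable def pinskerPhi (q : ℝ) : ℝ :=
  if q = 1 / 2 then 2 else Real.log ((1 - q) / q) / (1 - 2 * q)

open Set

lemma monoIcc {f f' : ℝ → ℝ} {a b : ℝ}
    (hc : ContinuousOn f (Icc a b))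
    (hd : ∀ x ∈ Ioo a b, HasDerivAt f (f' x) x)
    (hs : ∀ x ∈ Ioo a b, 0 ≤ f' x) : MonotoneOn f (Icc a b) := by
  apply monotoneOn_of_hasDerivWithinAt_nonneg (convex_Icc a b) hc
  · intro x hx; rw [interior_Icc] at hx; exact (hd x hx).hasDerivWithinAt
  · intro x hx; rw [interior_Icc] at hx; exact hs x hx

lemma antiIcc {f f' : ℝ → ℝ} {a b : ℝ}
    (hc : ContinuousOn f (Icc a b))
    (hd : ∀ x ∈ Ioo a b, HasDerivAt f (f' x) x)
    (hs : ∀ x ∈ Ioo a b, f' x ≤ 0) : AntitoneOn f (Icc a b) := by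
  apply antitoneOn_of_hasDerivWithinAt_nonpos (convex_Icc a b) hc
  · intro x hx; rw [interior_Icc] at hx; exact (hd x hx).hasDerivWithinAt
  · intro x hx; rw [interior_Icc] at hx; exact hs x hx

lemma le_recip_sum {p A : ℝ} (hp0 : 0 < p) (hp1 : p < 1) (h : A * (p * (1 - p)) ≤ 1) :
    A ≤ 1/p + 1/(1-p) := by
  have h1p : 0 < 1 - p := by linarith
  rw [div_add_div _ _ hp0.ne' h1p.ne', le_div_iff₀ (by positivity)]
  nlinarith

lemma recip_sum_le {p A : ℝ} (hp0 : 0 < p) (hp1 : p < 1) (h : 1 ≤ A * (p * (1 - p))) :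
    1/p + 1/(1-p) ≤ A := by
  have h1p : 0 < 1 - p := by linarith
  rw [div_add_div _ _ hp0.ne' h1p.ne', div_le_iff₀ (by positivity)]
  nlinarith

lemma log_lower {x : ℝ} (hx : 1 ≤ x) : 2*(x-1)/(x+1) ≤ Real.log x := by
  set f : ℝ → ℝ := fun t => Real.log t - 2*(t-1)/(t+1) with hf
  have key : MonotoneOn f (Icc 1 x) := by
    apply monotoneOn_of_hasDerivWithinAt_nonneg (convex_Icc 1 x)
      (f' := fun t => t⁻¹ - (2 * 1 * (t + 1) - 2 * (t - 1) * 1) / (t + 1) ^ 2)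
    · intro t ht
      have h1 : (1:ℝ) ≤ t := ht.1
      have h2 : t ≠ 0 := by linarith
      have h3 : t + 1 ≠ 0 := by linarith
      apply ContinuousAt.continuousWithinAt
      exact (Real.continuousAt_log h2).sub (ContinuousAt.div (by fun_prop) (by fun_prop) h3)
    · intro t ht
      rw [interior_Icc] at ht
      have h1 : (1:ℝ) < t := ht.1
      have h2 : t ≠ 0 := by linarith
      have h3 : t + 1 ≠ 0 := by linarith
      have := ((Real.hasDerivAt_log h2).sub
        ((((hasDerivAt_id t).sub_const 1).const_mul 2).div ((hasDerivAt_id t).add_const 1)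
          h3)).hasDerivWithinAt (s := interior (Icc 1 x))
      exact this
    · intro t ht
      rw [interior_Icc] at ht
      have h1 : (1:ℝ) < t := ht.1
      rw [sub_nonneg, div_le_iff₀ (by positivity : (0:ℝ) < (t+1)^2), inv_eq_one_div,
        div_mul_eq_mul_div, le_div_iff₀ (by linarith : (0:ℝ) < t)]
      nlinarith
  have h0 : f 1 = 0 := by simp [hf]
  have := key (left_mem_Icc.2 hx) (right_mem_Icc.2 hx) hx
  rw [h0] at this
  simp only [hf] at this
  linarith

lemma log_upper {x : ℝ} (hx : 1 ≤ x) : Real.log x ≤ (x - 1/x)/2 := by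
  set f : ℝ → ℝ := fun t => (t - 1/t)/2 - Real.log t with hf
  have key : MonotoneOn f (Icc 1 x) := by
    apply monotoneOn_of_hasDerivWithinAt_nonneg (convex_Icc 1 x)
      (f' := fun t => (1 - (-(t^2)⁻¹))/2 - t⁻¹)
    · intro t ht
      have h1 : (1:ℝ) ≤ t := ht.1
      have h2 : t ≠ 0 := by linarith
      apply ContinuousAt.continuousWithinAt
      exact (((continuousAt_id).sub ((continuousAt_const).div continuousAt_id h2)).div
        continuousAt_const (by norm_num)).sub (Real.continuousAt_log h2)
    · intro t ht
      rw [interior_Icc] at ht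
      have h1 : (1:ℝ) < t := ht.1
      have h2 : t ≠ 0 := by linarith
      have hd : HasDerivAt (fun t : ℝ => (t - 1/t)/2) ((1 - (-(t^2)⁻¹))/2) t := by
        simpa [one_div] using (((hasDerivAt_id t).sub (hasDerivAt_inv h2)).div_const 2)
      exact ((hd.sub (Real.hasDerivAt_log h2)).hasDerivWithinAt)
    · intro t ht
      rw [interior_Icc] at ht
      have h1 : (1:ℝ) < t := ht.1
      have ht0 : (0:ℝ) < t := by linarith
      have h2 : (0:ℝ) < t^2 := by positivity
      have e1 : (1 - (-(t^2)⁻¹))/2 = (t^2+1)/(2*t^2) := by field_simp; ring_nf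
      rw [sub_nonneg, e1, inv_eq_one_div, div_le_div_iff₀ ht0 (by positivity)]
      nlinarith [sq_nonneg (t-1)]
  have h0 : f 1 = 0 := by simp [hf]
  have := key (left_mem_Icc.2 hx) (right_mem_Icc.2 hx) hx
  rw [h0] at this
  simp only [hf] at this
  linarith

lemma phi_symm (q : ℝ) : pinskerPhi (1 - q) = pinskerPhi q := by
  unfold pinskerPhi
  rcases eq_or_ne q (1/2) with h | h
  · subst h; norm_num
  · have h' : 1 - q ≠ 1/2 := fun hc => h (by linarith)
    rw [if_neg h', if_neg h]
    have e1 : (1 - (1 - q)) / (1 - q) = ((1-q)/q)⁻¹ := by rw [inv_div]; ring_nf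
    rw [e1, Real.log_inv]
    rw [show (1 - 2*(1-q)) = -(1 - 2*q) by ring, div_neg, neg_div, neg_neg]

lemma phi_mul {q : ℝ} : (1 - 2*q) * pinskerPhi q = Real.log ((1-q)/q) := by
  unfold pinskerPhi
  rcases eq_or_ne q (1/2) with h | h
  · subst h; norm_num
  · rw [if_neg h, mul_div_cancel₀]
    intro hc; exact h (by linarith)

lemma phi_ge_two_of_le {q : ℝ} (hq0 : 0 < q) (hq2 : q ≤ 1/2) : 2 ≤ pinskerPhi q := by
  rcases eq_or_lt_of_le hq2 with h | h
  · rw [h]; unfold pinskerPhi; norm_num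
  · have h1q : 0 < 1 - q := by linarith
    have hx : 1 ≤ (1-q)/q := by rw [le_div_iff₀ hq0]; linarith
    have hl := log_lower hx
    have e : 2*((1-q)/q - 1)/((1-q)/q + 1) = 2*(1-2*q) := by
      rw [div_eq_iff (by positivity : (1-q)/q + 1 ≠ 0)]
      field_simp
      ring
    rw [e] at hl
    unfold pinskerPhi
    rw [if_neg (by intro hc; rw [hc] at h; linarith), le_div_iff₀ (by linarith)]
    linarith

lemma phi_ge_two {q : ℝ} (hq0 : 0 < q) (hq1 : q < 1) : 2 ≤ pinskerPhi q := by
  rcases le_or_gt q (1/2) with h | h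
  · exact phi_ge_two_of_le hq0 h
  · rw [← phi_symm q]; exact phi_ge_two_of_le (by linarith) (by linarith)

lemma phi_core {q : ℝ} (hq0 : 0 < q) (hq2 : q ≤ 1/2) : 2*q*(1-q)*pinskerPhi q ≤ 1 := by
  rcases eq_or_lt_of_le hq2 with h | h
  · rw [h]; unfold pinskerPhi; norm_num
  · have h1q : 0 < 1 - q := by linarith
    have hx : 1 ≤ (1-q)/q := by rw [le_div_iff₀ hq0]; linarith
    have hl := log_upper hx
    have e : ((1-q)/q - 1/((1-q)/q))/2 = (1-2*q)/(2*q*(1-q)) := by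
      rw [one_div, inv_div]
      field_simp
      ring
    rw [e] at hl
    unfold pinskerPhi
    rw [if_neg (by intro hc; rw [hc] at h; linarith)]
    have h2q : (0:ℝ) < 1 - 2*q := by linarith
    have step : Real.log ((1-q)/q) / (1 - 2*q) ≤ ((1-2*q)/(2*q*(1-q))) / (1 - 2*q) := by
      gcongr
    have efin : 2*q*(1-q) * (((1-2*q)/(2*q*(1-q))) / (1 - 2*q)) = 1 := by
      field_simp
    calc 2*q*(1-q) * (Real.log ((1-q)/q) / (1 - 2*q))
        ≤ 2*q*(1-q) * (((1-2*q)/(2*q*(1-q))) / (1 - 2*q)) := by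
          apply mul_le_mul_of_nonneg_left step (by positivity)
      _ = 1 := efin

noncomputable def hAux (q c p : ℝ) : ℝ :=
  -Real.negMulLog p - Real.negMulLog (1-p) - p*Real.log q - (1-p)*Real.log (1-q) - c*(p-q)^2

noncomputable def gAux (q c p : ℝ) : ℝ :=
  Real.log p - Real.log (1-p) - Real.log q + Real.log (1-q) - 2*c*(p-q)

lemma continuous_hAux (q c : ℝ) : Continuous (hAux q c) := by
  unfold hAux; fun_prop

lemma hasDerivAt_hAux (q c : ℝ) {p : ℝ} (hp0 : 0 < p) (hp1 : p < 1) :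
    HasDerivAt (hAux q c) (gAux q c p) p := by
  have h1p : (0:ℝ) < 1 - p := by linarith
  have h1 : HasDerivAt (fun x : ℝ => Real.negMulLog x) (-Real.log p - 1) p :=
    Real.hasDerivAt_negMulLog hp0.ne'
  have h2 : HasDerivAt (fun x : ℝ => Real.negMulLog (1-x)) ((-Real.log (1-p) - 1) * (-1)) p :=
    (Real.hasDerivAt_negMulLog h1p.ne').comp p ((hasDerivAt_id p).const_sub 1)
  have h3 : HasDerivAt (fun x : ℝ => x * Real.log q) (Real.log q) p := hasDerivAt_mul_const _
  have h4 : HasDerivAt (fun x : ℝ => (1-x) * Real.log (1-q)) (-1 * Real.log (1-q)) p :=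
    ((hasDerivAt_id p).const_sub 1).mul_const _
  have h5 : HasDerivAt (fun x : ℝ => c*(x-q)^2) (c*(2*(p-q)^1*1)) p :=
    (((hasDerivAt_id p).sub_const q).pow 2).const_mul c
  have H := ((((h1.neg.sub h2).sub h3).sub h4).sub h5)
  exact H.congr_deriv (by unfold gAux; ring)

lemma hasDerivAt_gAux (q c : ℝ) {p : ℝ} (hp0 : 0 < p) (hp1 : p < 1) :
    HasDerivAt (gAux q c) (1/p + 1/(1-p) - 2*c) p := by
  have h1p : (0:ℝ) < 1 - p := by linarith
  have h1 : HasDerivAt Real.log p⁻¹ p := Real.hasDerivAt_log hp0.ne'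
  have h2 : HasDerivAt (fun x : ℝ => Real.log (1-x)) ((1-p)⁻¹ * (-1)) p :=
    (Real.hasDerivAt_log h1p.ne').comp p ((hasDerivAt_id p).const_sub 1)
  have h5 : HasDerivAt (fun x : ℝ => 2*c*(x-q)) (2*c*1) p :=
    ((hasDerivAt_id p).sub_const q).const_mul (2*c)
  have H := (((h1.sub h2).sub_const (Real.log q)).add_const (Real.log (1-q))).sub h5
  exact H.congr_deriv (by ring)

set_option maxHeartbeats 1000000 in
lemma key_le {q p : ℝ} (hq0 : 0 < q) (hq2 : q ≤ 1/2) (hp : p ∈ Icc (0:ℝ) 1) :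
    pinskerPhi q * (p - q)^2 ≤ klBin p q := by
  set φ := pinskerPhi q with hφdef
  have hq1 : q < 1 := by linarith
  have h1q : 0 < 1 - q := by linarith
  have hB : 2 ≤ φ := phi_ge_two hq0 hq1
  have hφ : (0:ℝ) < φ := by linarith
  have hA : Real.log (1-q) - Real.log q = (1-2*q)*φ := by
    have h := phi_mul (q := q)
    rw [Real.log_div h1q.ne' hq0.ne'] at h
    linarith
  have hC : 2*q*(1-q)*φ ≤ 1 := phi_core hq0 hq2
  -- klBin = hAux + φ(x-q)^2 on [0,1]
  have heq : ∀ x ∈ Icc (0:ℝ) 1, klBin x q = hAux q φ x + φ*(x-q)^2 := by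
    intro x hx
    rcases eq_or_lt_of_le hx.1 with h0 | h0
    · rw [← h0]
      simp [klBin, hAux, Real.negMulLog, Real.log_div one_ne_zero h1q.ne']
    · rcases eq_or_lt_of_le hx.2 with h1 | h1
      · rw [h1]
        simp [klBin, hAux, Real.negMulLog, Real.log_div one_ne_zero hq0.ne']
      · unfold klBin hAux Real.negMulLog
        rw [Real.log_div (ne_of_gt h0) hq0.ne',
          Real.log_div (by linarith : (1:ℝ)-x ≠ 0) h1q.ne']
        ring
  -- values
  have hval_q : hAux q φ q = 0 := by unfold hAux Real.negMulLog; ring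
  have hval_1q : hAux q φ (1-q) = 0 := by
    unfold hAux Real.negMulLog
    rw [show (1:ℝ) - (1-q) = q by ring]
    linear_combination (1-2*q) * hA
  have hGq : gAux q φ q = 0 := by unfold gAux; ring
  have hG1q : gAux q φ (1-q) = 0 := by
    unfold gAux
    rw [show (1:ℝ) - (1-q) = q by ring]
    linear_combination 2 * hA
  -- the critical points p1 p2
  have hs0 : (0:ℝ) ≤ 1/4 - 1/(2*φ) := by
    rw [sub_nonneg, div_le_div_iff₀ (by positivity) (by norm_num : (0:ℝ) < 4)]
    linarith
  set s := Real.sqrt (1/4 - 1/(2*φ)) with hsdef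
  have hs2 : s^2 = 1/4 - 1/(2*φ) := Real.sq_sqrt hs0
  have hsn : 0 ≤ s := Real.sqrt_nonneg _
  have hs_le : s ≤ 1/2 - q := by
    have hq12 : q*(1-q) ≤ 1/(2*φ) := by
      rw [le_div_iff₀ (by positivity)]; nlinarith
    have h1 : 1/4 - 1/(2*φ) ≤ (1/2 - q)^2 := by nlinarith
    calc s ≤ Real.sqrt ((1/2-q)^2) := Real.sqrt_le_sqrt h1
      _ = 1/2 - q := Real.sqrt_sq (by linarith)
  set p1 := 1/2 - s with hp1def
  set p2 := 1/2 + s with hp2def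
  have hqp1 : q ≤ p1 := by rw [hp1def]; linarith
  have hp21q : p2 ≤ 1 - q := by rw [hp2def]; linarith
  have hp1pos : 0 < p1 := lt_of_lt_of_le hq0 hqp1
  have hp2lt : p2 < 1 := lt_of_le_of_lt hp21q (by linarith)
  have hp1le2 : p1 ≤ p2 := by rw [hp1def, hp2def]; linarith
  have hp1le1 : p1 < 1 := lt_of_le_of_lt hp1le2 hp2lt
  have hp2pos : 0 < p2 := lt_of_lt_of_le hp1pos hp1le2
  have hes : 2*φ*(1/4 - s^2) = 1 := by rw [hs2]; field_simp; ring
  -- sign of g' outside [p1,p2]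
  have hsign_out : ∀ x : ℝ, 0 < x → x < 1 → (x ≤ p1 ∨ p2 ≤ x) →
      0 ≤ 1/x + 1/(1-x) - 2*φ := by
    intro x hx0 hx1 hcase
    have hkey : 2*φ*(x*(1-x)) ≤ 1 := by
      have h1 : s^2 ≤ (x - 1/2)^2 := by
        rcases hcase with h | h
        · rw [hp1def] at h
          have : s ≤ 1/2 - x := by linarith
          calc s^2 ≤ (1/2 - x)^2 := pow_le_pow_left₀ hsn this 2
            _ = (x - 1/2)^2 := by ring
        · rw [hp2def] at h
          exact pow_le_pow_left₀ hsn (by linarith) 2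
      calc 2*φ*(x*(1-x)) = 2*φ*(1/4 - (x - 1/2)^2) := by ring
        _ ≤ 2*φ*(1/4 - s^2) :=
            mul_le_mul_of_nonneg_left (by linarith) (by positivity)
        _ = 1 := hes
    linarith [le_recip_sum hx0 hx1 hkey]
  have hsign_in : ∀ x : ℝ, p1 ≤ x → x ≤ p2 → 1/x + 1/(1-x) - 2*φ ≤ 0 := by
    intro x h1 h2
    have hx0 : 0 < x := lt_of_lt_of_le hp1pos h1
    have hx1 : x < 1 := lt_of_le_of_lt h2 hp2lt
    have hkey : 1 ≤ 2*φ*(x*(1-x)) := by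
      rw [hp1def] at h1; rw [hp2def] at h2
      have hsq : (x - 1/2)^2 ≤ s^2 := sq_le_sq' (by linarith) (by linarith)
      calc (1:ℝ) = 2*φ*(1/4 - s^2) := hes.symm
        _ ≤ 2*φ*(1/4 - (x - 1/2)^2) :=
            mul_le_mul_of_nonneg_left (by linarith) (by positivity)
        _ = 2*φ*(x*(1-x)) := by ring
    linarith [recip_sum_le hx0 hx1 hkey]
  -- continuity of gAux
  have hGc : ∀ a b : ℝ, 0 < a → b < 1 → ContinuousOn (gAux q φ) (Icc a b) := by
    intro a b ha hb x hx
    exact ((hasDerivAt_gAux q φ (lt_of_lt_of_le ha hx.1)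
      (lt_of_le_of_lt hx.2 hb)).continuousAt).continuousWithinAt
  -- monotonicity wrappers
  have hmono : ∀ a b : ℝ, 0 ≤ a → b ≤ 1 → (∀ x ∈ Ioo a b, 0 ≤ gAux q φ x) →
      MonotoneOn (hAux q φ) (Icc a b) := by
    intro a b ha hb hsign
    exact monoIcc (continuous_hAux q φ).continuousOn
      (fun x hx => hasDerivAt_hAux q φ (lt_of_le_of_lt ha hx.1) (lt_of_lt_of_le hx.2 hb)) hsign
  have hanti : ∀ a b : ℝ, 0 ≤ a → b ≤ 1 → (∀ x ∈ Ioo a b, gAux q φ x ≤ 0) →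
      AntitoneOn (hAux q φ) (Icc a b) := by
    intro a b ha hb hsign
    exact antiIcc (continuous_hAux q φ).continuousOn
      (fun x hx => hasDerivAt_hAux q φ (lt_of_le_of_lt ha hx.1) (lt_of_lt_of_le hx.2 hb)) hsign
  have gmono : ∀ a b : ℝ, 0 < a → b < 1 → (∀ x ∈ Ioo a b, x ≤ p1 ∨ p2 ≤ x) →
      MonotoneOn (gAux q φ) (Icc a b) := by
    intro a b ha hb hcond
    exact monoIcc (hGc a b ha hb)
      (fun x hx => hasDerivAt_gAux q φ (ha.trans hx.1) (hx.2.trans hb))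
      (fun x hx => hsign_out x (ha.trans hx.1) (hx.2.trans hb) (hcond x hx))
  -- region I : [0, q]
  have regionI : ∀ x ∈ Icc (0:ℝ) q, 0 ≤ hAux q φ x := by
    have hGle : ∀ x ∈ Ioo (0:ℝ) q, gAux q φ x ≤ 0 := by
      intro x hx
      have m := gmono x q hx.1 hq1 (fun y hy => Or.inl (le_trans hy.2.le hqp1))
      have := m (left_mem_Icc.2 hx.2.le) (right_mem_Icc.2 hx.2.le) hx.2.le
      linarith [hGq]
    have ha := hanti 0 q le_rfl hq1.le hGle
    intro x hx
    have h2 := ha hx (right_mem_Icc.2 hq0.le) hx.2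
    linarith [hval_q]
  -- region II : [q, p1]
  have regionII : ∀ x ∈ Icc q p1, 0 ≤ hAux q φ x := by
    have hGge : ∀ x ∈ Icc q p1, 0 ≤ gAux q φ x := by
      have m := gmono q p1 hq0 hp1le1 (fun y hy => Or.inl hy.2.le)
      intro x hx
      have := m (left_mem_Icc.2 hqp1) hx hx.1
      linarith [hGq]
    have hm := hmono q p1 hq0.le (by linarith) (fun x hx => hGge x (Ioo_subset_Icc_self hx))
    intro x hx
    have := hm (left_mem_Icc.2 hqp1) hx hx.1
    linarith [hval_q]
  -- region V : [p2, 1-q]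
  have regionV : ∀ x ∈ Icc p2 (1-q), 0 ≤ hAux q φ x := by
    have hGle : ∀ x ∈ Icc p2 (1-q), gAux q φ x ≤ 0 := by
      have m := gmono p2 (1-q) hp2pos (by linarith) (fun y hy => Or.inr hy.1.le)
      intro x hx
      have := m hx (right_mem_Icc.2 hp21q) hx.2
      linarith [hG1q]
    have ha := hanti p2 (1-q) hp2pos.le (by linarith)
      (fun x hx => hGle x (Ioo_subset_Icc_self hx))
    intro x hx
    have := ha hx (right_mem_Icc.2 hp21q) hx.2
    linarith [hval_1q]
  -- region IV : [1-q, 1]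
  have regionIV : ∀ x ∈ Icc (1-q) 1, 0 ≤ hAux q φ x := by
    have hGge : ∀ x ∈ Ioo (1-q) 1, 0 ≤ gAux q φ x := by
      intro x hx
      have m := gmono (1-q) x (by linarith) hx.2
        (fun y hy => Or.inr (le_trans hp21q hy.1.le))
      have := m (left_mem_Icc.2 hx.1.le) (right_mem_Icc.2 hx.1.le) hx.1.le
      linarith [hG1q]
    have hm := hmono (1-q) 1 (by linarith) le_rfl hGge
    intro x hx
    have := hm (left_mem_Icc.2 (by linarith : (1:ℝ)-q ≤ 1)) hx hx.1
    linarith [hval_1q]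
  -- region III : [p1, p2]
  have regionIII : ∀ x ∈ Icc p1 p2, 0 ≤ hAux q φ x := by
    have hp1nn : 0 ≤ hAux q φ p1 := regionII p1 ⟨hqp1, le_rfl⟩
    have hp2nn : 0 ≤ hAux q φ p2 := regionV p2 ⟨le_rfl, hp21q⟩
    have ganti : AntitoneOn (gAux q φ) (Icc p1 p2) :=
      antiIcc (hGc p1 p2 hp1pos hp2lt)
        (fun x hx => hasDerivAt_gAux q φ (hp1pos.trans hx.1) (hx.2.trans hp2lt))
        (fun x hx => hsign_in x hx.1.le hx.2.le)
    by_cases hcase : 0 ≤ gAux q φ p2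
    · have hGge : ∀ x ∈ Icc p1 p2, 0 ≤ gAux q φ x := by
        intro x hx
        have := ganti hx (right_mem_Icc.2 hp1le2) hx.2
        linarith
      have hm := hmono p1 p2 hp1pos.le hp2lt.le
        (fun x hx => hGge x (Ioo_subset_Icc_self hx))
      intro x hx
      have := hm (left_mem_Icc.2 hp1le2) hx hx.1
      linarith
    · push_neg at hcase
      by_cases hcase1 : gAux q φ p1 ≤ 0
      · have hGle : ∀ x ∈ Icc p1 p2, gAux q φ x ≤ 0 := by
          intro x hx
          have := ganti (left_mem_Icc.2 hp1le2) hx hx.1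
          linarith
        have ha := hanti p1 p2 hp1pos.le hp2lt.le
          (fun x hx => hGle x (Ioo_subset_Icc_self hx))
        intro x hx
        have := ha hx (right_mem_Icc.2 hp1le2) hx.2
        linarith
      · push_neg at hcase1
        have hiv := intermediate_value_Icc' hp1le2 (hGc p1 p2 hp1pos hp2lt)
        have h0mem : (0:ℝ) ∈ Icc (gAux q φ p2) (gAux q φ p1) := ⟨hcase.le, hcase1.le⟩
        obtain ⟨z, hz, hz0⟩ := hiv h0mem
        intro x hx
        rcases le_total x z with hxz | hxz
        · have hGge : ∀ y ∈ Ioo p1 z, 0 ≤ gAux q φ y := by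
            intro y hy
            have := ganti ⟨hy.1.le, le_trans hy.2.le hz.2⟩ hz hy.2.le
            rw [hz0] at this
            linarith
          have hm := hmono p1 z hp1pos.le (le_trans hz.2 hp2lt.le) hGge
          have := hm (left_mem_Icc.2 hz.1) ⟨hx.1, hxz⟩ hx.1
          linarith
        · have hGle : ∀ y ∈ Ioo z p2, gAux q φ y ≤ 0 := by
            intro y hy
            have := ganti hz ⟨le_trans hz.1 hy.1.le, hy.2.le⟩ hy.1.le
            rw [hz0] at this
            linarith
          have ha := hanti z p2 (le_trans hp1pos.le hz.1) hp2lt.le hGle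
          have := ha ⟨hxz, hx.2⟩ (right_mem_Icc.2 hz.2) hx.2
          linarith
  -- combine
  rw [heq p hp]
  have hfinal : 0 ≤ hAux q φ p := by
    rcases le_total p q with h | h
    · exact regionI p ⟨hp.1, h⟩
    · rcases le_total p p1 with h2 | h2
      · exact regionII p ⟨h, h2⟩
      · rcases le_total p p2 with h3 | h3
        · exact regionIII p ⟨h2, h3⟩
        · rcases le_total p (1-q) with h4 | h4
          · exact regionV p ⟨h3, h4⟩
          · exact regionIV p ⟨h4, hp.2⟩
  linarith

lemma klBin_symm (p q : ℝ) : klBin (1-p) (1-q) = klBin p q := by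
  unfold klBin
  rw [show (1:ℝ)-(1-p) = p by ring, show (1:ℝ)-(1-q) = q by ring]
  ring

lemma part1 : ∀ p ∈ Set.Icc (0 : ℝ) 1, ∀ q ∈ Set.Ioo (0 : ℝ) 1,
    klBin p q ≥ pinskerPhi q * (p - q) ^ 2 := by
  intro p hp q hq
  rcases le_or_gt q (1/2) with h | h
  · exact key_le hq.1 h hp
  · have := key_le (q := 1-q) (p := 1-p) (by linarith [hq.2]) (by linarith)
      ⟨by linarith [hp.2], by linarith [hp.1]⟩
    rw [phi_symm, klBin_symm] at this
    have e : pinskerPhi q * ((1-p)-(1-q))^2 = pinskerPhi q * (p-q)^2 := by ring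
    linarith

lemma ratio_eq {q : ℝ} (hq0 : 0 < q) (hq1 : q < 1) (hq : q ≠ 1/2) :
    klBin (1-q) q / ((1-q) - q)^2 = pinskerPhi q := by
  have h2q : (1:ℝ) - 2*q ≠ 0 := fun h => hq (by linarith)
  unfold klBin pinskerPhi
  rw [if_neg hq, show (1:ℝ)-(1-q) = q by ring]
  have e1 : Real.log (q/(1-q)) = -Real.log ((1-q)/q) := by
    rw [← Real.log_inv, inv_div]
  rw [e1, show ((1:ℝ)-q) - q = 1 - 2*q by ring]
  rw [div_eq_div_iff (pow_ne_zero 2 h2q) h2q]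
  ring

lemma klBin_half_ub {ε : ℝ} (hε0 : 0 < ε) (hε : ε ≤ 1/9) :
    klBin (1/2+ε) (1/2) ≤ (2+ε)*ε^2 := by
  set c : ℝ := 2 + ε with hcdef
  have hp0 : (0:ℝ) < 1/2 + ε := by linarith
  have hp1 : (1:ℝ)/2 + ε < 1 := by linarith
  have h1p : (0:ℝ) < 1 - (1/2 + ε) := by linarith
  have e : klBin (1/2+ε) (1/2) = hAux (1/2) c (1/2+ε) + c*((1/2+ε)-1/2)^2 := by
    unfold klBin hAux Real.negMulLog
    rw [Real.log_div hp0.ne' (by norm_num : (1:ℝ)/2 ≠ 0),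
      Real.log_div h1p.ne' (by norm_num : (1:ℝ)-1/2 ≠ 0)]
    ring
  have hval : hAux (1/2) c (1/2) = 0 := by unfold hAux Real.negMulLog; ring
  have hGval : gAux (1/2) c (1/2) = 0 := by unfold gAux; ring
  have hGc : ContinuousOn (gAux (1/2) c) (Icc (1/2) (1/2+ε)) := by
    intro x hx
    exact ((hasDerivAt_gAux (1/2) c (by linarith [hx.1] : (0:ℝ) < x)
      (by linarith [hx.2] : x < 1)).continuousAt).continuousWithinAt
  have hganti : AntitoneOn (gAux (1/2) c) (Icc (1/2) (1/2+ε)) := by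
    apply antiIcc hGc (f' := fun x => 1/x + 1/(1-x) - 2*c)
    · intro x hx
      exact hasDerivAt_gAux (1/2) c (by linarith [hx.1]) (by linarith [hx.2])
    · intro x hx
      have hx0 : (0:ℝ) < x := by linarith [hx.1]
      have hx1 : x < 1 := by linarith [hx.2]
      have hu0 : (0:ℝ) ≤ x - 1/2 := by linarith [hx.1]
      have hu : x - 1/2 ≤ ε := by linarith [hx.2]
      have hsq : (x - 1/2)^2 ≤ ε^2 := pow_le_pow_left₀ hu0 hu 2
      have hkey : 1 ≤ 2*c*(x*(1-x)) := by
        rw [hcdef]; nlinarith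
      linarith [recip_sum_le hx0 hx1 hkey]
  have hGle : ∀ x ∈ Ioo (1/2:ℝ) (1/2+ε), gAux (1/2) c x ≤ 0 := by
    intro x hx
    have := hganti (left_mem_Icc.2 (by linarith)) (Ioo_subset_Icc_self hx) hx.1.le
    linarith
  have hhanti : AntitoneOn (hAux (1/2) c) (Icc (1/2) (1/2+ε)) := by
    apply antiIcc (continuous_hAux (1/2) c).continuousOn
      (f' := gAux (1/2) c)
    · intro x hx
      exact hasDerivAt_hAux (1/2) c (by linarith [hx.1]) (by linarith [hx.2])
    · exact hGle
  have hfin : hAux (1/2) c (1/2+ε) ≤ 0 := by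
    have := hhanti (left_mem_Icc.2 (by linarith)) (right_mem_Icc.2 (by linarith)) (by linarith)
    linarith
  rw [e]
  have : ((1:ℝ)/2+ε - 1/2)^2 = ε^2 := by ring
  rw [this, hcdef]
  linarith

lemma part2 : ∀ q ∈ Set.Ioo (0 : ℝ) 1,
    IsGLB {r : ℝ | ∃ p ∈ Set.Icc (0 : ℝ) 1, p ≠ q ∧ r = klBin p q / (p - q) ^ 2}
      (pinskerPhi q) := by
  intro q hq
  constructor
  · rintro r ⟨p, hp, hne, rfl⟩
    have h1 := part1 p hp q hq
    have hs : (0:ℝ) < (p-q)^2 := by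
      have := sub_ne_zero.mpr hne
      positivity
    rw [le_div_iff₀ hs]
    exact h1
  · intro b hb
    rcases eq_or_ne q (1/2) with rfl | hq'
    · -- q = 1/2 : approximation argument
      have hphi : pinskerPhi (1/2) = 2 := if_pos rfl
      rw [hphi]
      by_contra hcon
      push_neg at hcon
      set ε : ℝ := min ((b-2)/2) (1/9) with hεdef
      have hε0 : 0 < ε := lt_min (by linarith) (by norm_num)
      have hε9 : ε ≤ 1/9 := min_le_right _ _
      have hεb : ε ≤ (b-2)/2 := min_le_left _ _
      have hmem : klBin (1/2+ε) (1/2) / ((1/2+ε) - 1/2)^2 ∈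
          {r : ℝ | ∃ p ∈ Set.Icc (0 : ℝ) 1, p ≠ 1/2 ∧ r = klBin p (1/2) / (p - 1/2) ^ 2} :=
        ⟨1/2+ε, ⟨by linarith, by linarith⟩, by intro h; linarith [congrArg (· - (1/2:ℝ)) h], rfl⟩
      have hble := hb hmem
      have he2 : ((1:ℝ)/2+ε - 1/2)^2 = ε^2 := by ring
      rw [he2] at hble
      have hub := klBin_half_ub hε0 hε9
      have : klBin (1/2+ε) (1/2) / ε^2 ≤ 2 + ε := by
        rw [div_le_iff₀ (by positivity)]
        linarith
      linarith
    · apply hb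
      exact ⟨1-q, ⟨by linarith [hq.2], by linarith [hq.1]⟩,
        fun hc => hq' (by linarith), (ratio_eq hq.1 hq.2 hq').symm⟩

lemma part3 : ∀ q ∈ Set.Ioo (0 : ℝ) 1, q ≠ 1 / 2 →
    klBin (1 - q) q / ((1 - q) - q) ^ 2 = pinskerPhi q :=
  fun q hq hq' => ratio_eq hq.1 hq.2 hq'

/-- Refined Pinsker's inequality for Bernoulli distributions
(Ordentlich–Weinberger): `kl(p,q) ≥ φ(q)·(p−q)²`, and `φ(q)` is the optimal
such factor: the infimum over `p ∈ [0,1]`, `p ≠ q`, of `kl(p,q)/(p−q)²` equals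
`φ(q)`, and it is attained at `p = 1 − q`. -/
theorem refined_pinsker_bernoulli :
    (∀ p ∈ Set.Icc (0 : ℝ) 1, ∀ q ∈ Set.Ioo (0 : ℝ) 1,
        klBin p q ≥ pinskerPhi q * (p - q) ^ 2) ∧
      (∀ q ∈ Set.Ioo (0 : ℝ) 1,
        IsGLB {r : ℝ | ∃ p ∈ Set.Icc (0 : ℝ) 1, p ≠ q ∧ r = klBin p q / (p - q) ^ 2}
          (pinskerPhi q)) ∧
      (∀ q ∈ Set.Ioo (0 : ℝ) 1, q ≠ 1 / 2 →
        klBin (1 - q) q / ((1 - q) - q) ^ 2 = pinskerPhi q) :=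
  ⟨part1, part2, part3⟩
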